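/- arXiv:1311.6988 — 2 statements merged into one kernel-verified Lean document; each statement's English description precedes it below -/
import Mathlib

section
/- Translation of anti-strategies (Theorem 9.6(ii), classically valid form): let φ : (List ℕ → Bool) → (ℕ → ℕ) be continuous (product topologies of discrete spaces) and suppose that for every τ : List ℕ → Bool, φ τ lies in (ω×2)^ω and φ τ II-obeys τ. Then there exists σ : List ℕ → ℕ such that every δ in (ω×2)^ω that I-obeys σ is of the form φ τ for some τ : List ℕ → Bool. -/
/-- The first `n` values of `δ` as a list. -/
def segN (δ : ℕ → ℕ) (n : ℕ) : List ℕ := List.ofFn fun i : Fin n => δ i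

/-- `δ` is a member of `(ω×2)^ω`: at odd indices only bits are played. -/
def MemOmegaTwo (δ : ℕ → ℕ) : Prop := ∀ n, δ (2 * n + 1) ≤ 1

/-- `δ` I-obeys the strategy `σ` for player I. -/
def ObeysI (δ : ℕ → ℕ) (σ : List ℕ → ℕ) : Prop :=
  ∀ n, δ (2 * n) = σ (segN δ (2 * n))

/-- `δ` II-obeys the strategy `τ` for player II. -/
def ObeysII (δ : ℕ → ℕ) (τ : List ℕ → Bool) : Prop :=
  ∀ n, δ (2 * n + 1) = if τ (segN δ (2 * n + 1)) then 1 else 0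

lemma segN_length (δ : ℕ → ℕ) (n : ℕ) : (segN δ n).length = n := by simp [segN]

lemma segN_succ (δ : ℕ → ℕ) (n : ℕ) : segN δ (n + 1) = segN δ n ++ [δ n] := by
  rw [segN, List.ofFn_succ', List.concat_eq_append]
  rfl

lemma segN_eq_iff {x y : ℕ → ℕ} {n : ℕ} :
    segN x n = segN y n ↔ ∀ i < n, x i = y i := by
  constructor
  · intro h i hi
    have := List.ofFn_inj.mp h
    exact congrFun this ⟨i, hi⟩
  · intro h
    exact List.ofFn_inj.mpr (funext fun i => h i i.2)

/-- The key invariant: there is a `τ` whose play extends the history `s` while `τ`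
agrees with an arbitrarily prescribed bit function on all odd-length extensions of `s`. -/
def Flex (φ : (List ℕ → Bool) → (ℕ → ℕ)) (s : List ℕ) : Prop :=
  ∀ f : List ℕ → Bool, ∃ τ : List ℕ → Bool,
    segN (φ τ) s.length = s ∧ ∀ u : List ℕ, s <+: u → Odd u.length → τ u = f u

lemma flex_step (φ : (List ℕ → Bool) → (ℕ → ℕ))
    (hanti : ∀ τ : List ℕ → Bool, MemOmegaTwo (φ τ) ∧ ObeysII (φ τ) τ)
    (s : List ℕ) (n : ℕ) (hs : s.length = 2 * n) (h : Flex φ s) :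
    ∃ m : ℕ, ∀ b : Bool, Flex φ (s ++ [m, cond b 1 0]) := by
  classical
  by_contra hcon
  push_neg at hcon
  choose b hb using hcon
  have hb' : ∀ m : ℕ, ∃ f : List ℕ → Bool, ∀ τ : List ℕ → Bool,
      segN (φ τ) (s ++ [m, cond (b m) 1 0]).length = s ++ [m, cond (b m) 1 0] →
      ∃ u : List ℕ, (s ++ [m, cond (b m) 1 0]) <+: u ∧ Odd u.length ∧ τ u ≠ f u := by
    intro m
    have hm := hb m
    unfold Flex at hm
    push_neg at hm
    obtain ⟨f, hf⟩ := hm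
    exact ⟨f, fun τ hτ => hf τ hτ⟩
  choose f hf using hb'
  set fstar : List ℕ → Bool := fun u =>
    if u.length = 2 * n + 1 then b (u.getD (2 * n) 0) else f (u.getD (2 * n) 0) u with hfstar
  obtain ⟨τ, hτK, hτf⟩ := h fstar
  rw [hs] at hτK
  set m := φ τ (2 * n) with hm
  have hgetD : ∀ t : List ℕ, (s ++ (m :: t)).getD (2 * n) 0 = m := by
    intro t
    rw [List.getD_append_right _ _ _ _ (by omega), hs]
    simp
  have h1 : segN (φ τ) (2 * n + 1) = s ++ [m] := by rw [segN_succ, hτK]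
  have hpre1 : s <+: s ++ [m] := List.prefix_append s [m]
  have hlen1 : (s ++ [m]).length = 2 * n + 1 := by simp [hs]
  have hodd1 : Odd (s ++ [m]).length := by rw [hlen1]; exact ⟨n, by ring⟩
  have hτu1 : τ (s ++ [m]) = b m := by
    rw [hτf _ hpre1 hodd1, hfstar]
    show (if (s ++ [m]).length = 2 * n + 1 then b ((s ++ [m]).getD (2 * n) 0)
      else f ((s ++ [m]).getD (2 * n) 0) (s ++ [m])) = b m
    rw [if_pos hlen1]
    exact congrArg b (hgetD [])
  have h2 : φ τ (2 * n + 1) = cond (b m) 1 0 := by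
    have hob := (hanti τ).2 n
    rw [h1, hτu1] at hob
    rw [hob]
    cases b m <;> rfl
  have h3 : segN (φ τ) (2 * n + 2) = s ++ [m, cond (b m) 1 0] := by
    rw [segN_succ, h1, h2]
    simp
  have hlen2 : (s ++ [m, cond (b m) 1 0]).length = 2 * n + 2 := by simp [hs]
  obtain ⟨u, hu1, hu2, hu3⟩ := hf m τ (by rw [hlen2]; exact h3)
  apply hu3
  have hpre : s <+: u := (List.prefix_append s [m, cond (b m) 1 0]).trans hu1
  rw [hτf u hpre hu2, hfstar]
  obtain ⟨t, ht⟩ := hu1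
  have hulen : 2 * n + 2 ≤ u.length := by
    rw [← ht]
    simp [hs]
  have hune : u.length ≠ 2 * n + 1 := by omega
  simp only [if_neg hune]
  have hu : u = s ++ (m :: cond (b m) 1 0 :: t) := by rw [← ht]; simp
  rw [hu, hgetD]

/-- Translation of anti-strategies (Theorem 9.6(ii), classically valid form):
every continuous anti-strategy for player I in `(ω×2)^ω` translates into a
strategy for player I. -/
theorem antistrategy_translates (φ : (List ℕ → Bool) → (ℕ → ℕ))
    (hcont : Continuous φ)
    (hanti : ∀ τ : List ℕ → Bool, MemOmegaTwo (φ τ) ∧ ObeysII (φ τ) τ) :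
    ∃ σ : List ℕ → ℕ, ∀ δ : ℕ → ℕ,
      MemOmegaTwo δ → ObeysI δ σ → ∃ τ : List ℕ → Bool, δ = φ τ := by
  classical
  refine ⟨fun s => if h : ∃ m : ℕ, ∀ b : Bool, Flex φ (s ++ [m, cond b 1 0])
    then h.choose else 0, ?_⟩
  intro δ hδ hobI
  have key : ∀ n, Flex φ (segN δ (2 * n)) := by
    intro n
    induction n with
    | zero =>
      intro f
      exact ⟨f, by simp [segN], fun u _ _ => rfl⟩
    | succ n ih =>
      have hex : ∃ m : ℕ, ∀ b : Bool, Flex φ (segN δ (2 * n) ++ [m, cond b 1 0]) :=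
        flex_step φ hanti _ n (segN_length δ _) ih
      have hδ2n : δ (2 * n) = hex.choose := by
        have h0 := hobI n
        exact h0.trans (by simp only [dif_pos hex])
      have hc := hex.choose_spec
      have hb : cond (decide (δ (2 * n + 1) = 1)) 1 0 = δ (2 * n + 1) := by
        have h1 := hδ n
        interval_cases h : δ (2 * n + 1) <;> simp
      have hseg : segN δ (2 * (n + 1)) =
          segN δ (2 * n) ++ [hex.choose, cond (decide (δ (2 * n + 1) = 1)) 1 0] := by
        have e : 2 * (n + 1) = (2 * n + 1) + 1 := by ring
        rw [e, segN_succ, segN_succ, hδ2n, hb]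
        simp
      rw [hseg]
      exact hc _
  set V : ℕ → Set (List ℕ → Bool) := fun n => {τ | ∀ i < n, φ τ i = δ i} with hV
  have hVsub : ∀ n, V (n + 1) ⊆ V n := by
    intro n τ hτ i hi
    exact hτ i (by omega)
  have hVne : ∀ n, (V n).Nonempty := by
    intro n
    obtain ⟨τ, hτ, -⟩ := key n (fun _ => false)
    rw [segN_length] at hτ
    exact ⟨τ, fun i hi => segN_eq_iff.mp hτ i (by omega)⟩
  have hVcl : ∀ n, IsClosed (V n) := by
    intro n
    have : V n = ⋂ (i : ℕ) (_ : i < n), {τ | φ τ i = δ i} := by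
      ext τ
      simp [hV]
    rw [this]
    refine isClosed_iInter fun i => isClosed_iInter fun _ => ?_
    exact isClosed_eq ((continuous_apply i).comp hcont) continuous_const
  have hVc : IsCompact (V 0) := by
    have : V 0 = Set.univ := by
      ext τ
      simp [hV]
    rw [this]
    exact isCompact_univ
  obtain ⟨τ, hτ⟩ :=
    IsCompact.nonempty_iInter_of_sequence_nonempty_isCompact_isClosed V hVsub hVne hVc hVcl
  refine ⟨τ, funext fun i => ?_⟩
  exact (Set.mem_iInter.mp hτ (i + 1) i (by omega)).symm
end

section
/- Intuitionistic Determinacy Theorem, weak I-determinacy of arbitrary sets (Theorem 9.6(iii), classically valid form): let X be a set of elements of ℕ → ℕ and suppose there exists a continuous φ : (List ℕ → Bool) → (ℕ → ℕ) such that for every τ : List ℕ → Bool, φ τ lies in (ω×2)^ω, φ τ II-obeys τ, and φ τ ∈ X. Then there exists σ : List ℕ → ℕ such that every δ in (ω×2)^ω that I-obeys σ lies in X. -/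
namespace WID

@[simp] lemma segN_length (δ : ℕ → ℕ) (n : ℕ) : (segN δ n).length = n := by
  simp [segN]

@[simp] lemma segN_zero (δ : ℕ → ℕ) : segN δ 0 = [] := rfl

lemma segN_succ (δ : ℕ → ℕ) (n : ℕ) : segN δ (n + 1) = segN δ n ++ [δ n] := by
  simp only [segN, List.ofFn_succ', List.concat_eq_append]
  rfl

lemma segN_eq_iff {δ δ' : ℕ → ℕ} {n : ℕ} :
    segN δ n = segN δ' n ↔ ∀ i < n, δ i = δ' i := by
  constructor
  · intro h i hi
    have := List.ofFn_inj.mp h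
    exact congrFun this ⟨i, hi⟩
  · intro h
    simp only [segN]
    congr 1
    funext i
    exact h i i.2

lemma segN_append2 (δ : ℕ → ℕ) (L : ℕ) :
    segN δ (L + 2) = segN δ L ++ [δ L, δ (L + 1)] := by
  rw [segN_succ, segN_succ, List.append_assoc]
  rfl

lemma segN_two_ext {δ : ℕ → ℕ} {p : List ℕ} {m b : ℕ}
    (h : segN δ (p.length + 2) = p ++ [m, b]) :
    segN δ p.length = p ∧ δ p.length = m ∧ δ (p.length + 1) = b := by
  rw [segN_append2] at h
  have hl : (segN δ p.length).length = p.length := segN_length _ _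
  obtain ⟨h1, h2⟩ := List.append_inj h hl
  refine ⟨h1, ?_, ?_⟩ <;> simp_all

lemma bool_ite_toNat (b : Bool) : (if b then 1 else 0 : ℕ) = b.toNat := by
  cases b <;> rfl

/-- Uniform finite dependence: `φ τ ↾ n` only depends on `τ ↾ F` for a finite `F`. -/
lemma exists_finset (φ : (List ℕ → Bool) → ℕ → ℕ) (hc : Continuous φ) (n : ℕ) :
    ∃ F : Finset (List ℕ), ∀ τ τ' : List ℕ → Bool,
      (∀ q ∈ F, τ q = τ' q) → ∀ i < n, φ τ i = φ τ' i := by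
  classical
  have hUopen : ∀ τ : List ℕ → Bool, IsOpen {τ' | ∀ i < n, φ τ' i = φ τ i} := by
    intro τ
    have hrw : {τ' | ∀ i < n, φ τ' i = φ τ i}
        = ⋂ i ∈ Finset.range n, (fun τ' => φ τ' i) ⁻¹' {φ τ i} := by
      ext τ'
      simp
    rw [hrw]
    refine isOpen_biInter_finset fun i _ => ?_
    exact (isOpen_discrete _).preimage ((continuous_apply i).comp hc)
  have hmem : ∀ τ : List ℕ → Bool, τ ∈ {τ' | ∀ i < n, φ τ' i = φ τ i} :=
    fun τ i _ => rfl
  have h1 := fun τ => isOpen_pi_iff.mp (hUopen τ) τ (hmem τ)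
  choose I u hIu using h1
  have hVopen : ∀ τ : List ℕ → Bool,
      IsOpen ((↑(I τ) : Set (List ℕ)).pi fun q => {τ q}) := fun τ =>
    isOpen_set_pi (I τ).finite_toSet fun q _ => isOpen_discrete _
  have hVmem : ∀ τ : List ℕ → Bool,
      τ ∈ (↑(I τ) : Set (List ℕ)).pi fun q => {τ q} := fun τ q _ => rfl
  have hVsub : ∀ τ₀ τ' : List ℕ → Bool,
      τ' ∈ ((↑(I τ₀) : Set (List ℕ)).pi fun q => {τ₀ q}) → ∀ i < n, φ τ' i = φ τ₀ i := by
    intro τ₀ τ' hτ'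
    refine (hIu τ₀).2 ?_
    intro q hq
    have h := hτ' q hq
    simp only [Set.mem_singleton_iff] at h
    rw [h]
    exact ((hIu τ₀).1 q hq).2
  obtain ⟨t, ht⟩ := isCompact_univ.elim_finite_subcover
    (fun τ : List ℕ → Bool => (↑(I τ) : Set (List ℕ)).pi fun q => {τ q}) hVopen
    (fun τ _ => Set.mem_iUnion.mpr ⟨τ, hVmem τ⟩)
  refine ⟨t.biUnion fun τ₀ => I τ₀, ?_⟩
  intro τ τ' hag i hi
  obtain ⟨τ₀, hτ₀t, hτV⟩ : ∃ τ₀ ∈ t, τ ∈ (↑(I τ₀) : Set (List ℕ)).pi fun q => {τ₀ q} := by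
    have := ht (Set.mem_univ τ)
    simpa using this
  have hτ'V : τ' ∈ (↑(I τ₀) : Set (List ℕ)).pi fun q => {τ₀ q} := by
    intro q hq
    have hqF : q ∈ t.biUnion fun τ₀ => I τ₀ := Finset.mem_biUnion.mpr ⟨τ₀, hτ₀t, hq⟩
    have h1 := hag q hqF
    have h2 := hτV q hq
    simp only [Set.mem_singleton_iff] at h2 ⊢
    rw [← h1, h2]
  have e1 : φ τ i = φ τ₀ i := hVsub τ₀ τ hτV i hi
  have e2 : φ τ' i = φ τ₀ i := hVsub τ₀ τ' hτ'V i hi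
  rw [e1, e2]

/-- Odd-length initial segments of `φ τ` (below the modulus) belong to `F`. -/
lemma selfread {φ : (List ℕ → Bool) → ℕ → ℕ}
    (hob : ∀ τ, ObeysII (φ τ) τ) {n : ℕ} {F : Finset (List ℕ)}
    (hF : ∀ τ τ' : List ℕ → Bool, (∀ q ∈ F, τ q = τ' q) → ∀ i < 2 * n, φ τ i = φ τ' i)
    (τ : List ℕ → Bool) {k : ℕ} (hk : k < n) :
    segN (φ τ) (2 * k + 1) ∈ F := by
  classical
  by_contra hq
  set q := segN (φ τ) (2 * k + 1) with hqdef
  set τ' := Function.update τ q (! τ q) with hτ'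
  have hag : ∀ r ∈ F, τ r = τ' r := by
    intro r hr
    have hne : r ≠ q := fun h => hq (h ▸ hr)
    simp [hτ', Function.update_of_ne hne]
  have heq : ∀ i < 2 * n, φ τ i = φ τ' i := hF τ τ' hag
  have hseg : segN (φ τ') (2 * k + 1) = q := by
    rw [hqdef]
    exact segN_eq_iff.mpr fun i hi => (heq i (by omega)).symm
  have h1 := hob τ k
  have h2 := hob τ' k
  rw [hseg] at h2
  rw [← hqdef] at h1
  have h3 := heq (2 * k + 1) (by omega)
  rw [h1, h2] at h3
  have hτ'q : τ' q = ! τ q := by simp [hτ']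
  rw [hτ'q] at h3
  cases hb : τ q <;> simp [hb] at h3

/-- Fueled badness predicate for positions. -/
def Badf (φ : (List ℕ → Bool) → ℕ → ℕ) : ℕ → List ℕ → Prop
  | 0, p => ∀ τ, segN (φ τ) p.length ≠ p
  | j + 1, p => ∀ m, ∃ b : Bool, Badf φ j (p ++ [m, b.toNat])

open Classical in
/-- II's "bad bit" choice function. -/
noncomputable def psi (φ : (List ℕ → Bool) → ℕ → ℕ) (n : ℕ) (q : List ℕ) : Bool :=
  if h : ∃ b : Bool, Badf φ (n - (q.length + 1) / 2) (q ++ [b.toNat]) then h.choose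
  else false

lemma psi_spec {φ : (List ℕ → Bool) → ℕ → ℕ} {n : ℕ} {q : List ℕ}
    (h : ∃ b : Bool, Badf φ (n - (q.length + 1) / 2) (q ++ [b.toNat])) :
    Badf φ (n - (q.length + 1) / 2) (q ++ [(psi φ n q).toNat]) := by
  rw [psi, dif_pos h]
  exact h.choose_spec

/-- The key lemma: the empty position is never bad. -/
lemma goodf_nil (φ : (List ℕ → Bool) → ℕ → ℕ) (hc : Continuous φ)
    (hob : ∀ τ, ObeysII (φ τ) τ) (n : ℕ) : ¬ Badf φ n [] := by
  classical
  intro hbad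
  obtain ⟨F, hF⟩ := exists_finset φ hc (2 * n)
  set ψ := psi φ n with hψ
  set Φ : (List ℕ → Bool) → ℕ := fun τ => (F.filter fun q => ¬ (τ q = ψ q)).card with hΦ
  have step : ∀ τ : List ℕ → Bool, ∃ τ', Φ τ' < Φ τ := by
    intro τ
    have hdev : ∃ k, k < n ∧ τ (segN (φ τ) (2 * k + 1)) ≠ ψ (segN (φ τ) (2 * k + 1)) := by
      by_contra hcon
      push_neg at hcon
      have chain : ∀ k, k ≤ n → Badf φ (n - k) (segN (φ τ) (2 * k)) := by
        intro k hk
        induction k with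
        | zero => simpa using hbad
        | succ k ih =>
          have hk' : k < n := by omega
          have hb := ih (by omega)
          have hnk : n - k = (n - (k + 1)) + 1 := by omega
          rw [hnk] at hb
          have hb' := hb (φ τ (2 * k))
          set q : List ℕ := segN (φ τ) (2 * k + 1) with hqdef
          have hq : q = segN (φ τ) (2 * k) ++ [φ τ (2 * k)] := segN_succ _ _
          have hql : q.length = 2 * k + 1 := segN_length _ _
          have hfuel : n - (q.length + 1) / 2 = n - (k + 1) := by rw [hql]; omega
          have hb'' : ∃ b : Bool, Badf φ (n - (q.length + 1) / 2) (q ++ [b.toNat]) := by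
            rw [hfuel]
            obtain ⟨b, hbb⟩ := hb'
            refine ⟨b, ?_⟩
            have : segN (φ τ) (2 * k) ++ [φ τ (2 * k), b.toNat] = q ++ [b.toNat] := by
              rw [hq, List.append_assoc]
              rfl
            rwa [this] at hbb
          have hspec := psi_spec hb''
          rw [hfuel] at hspec
          have hτq : τ q = ψ q := hcon k hk'
          have hnext : segN (φ τ) (2 * (k + 1)) = q ++ [(ψ q).toNat] := by
            have h1 : 2 * (k + 1) = (2 * k + 1) + 1 := by omega
            rw [h1, segN_succ, ← hqdef]
            have h2 := hob τ k
            rw [← hqdef] at h2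
            rw [h2, bool_ite_toNat, hτq]
          rw [hnext]
          exact hspec
      have hfin := chain n le_rfl
      simp only [Nat.sub_self] at hfin
      exact hfin τ (by rw [segN_length])
    obtain ⟨k, hkn, hne⟩ := hdev
    set q := segN (φ τ) (2 * k + 1) with hqdef
    have hqF : q ∈ F := selfread hob hF τ hkn
    refine ⟨Function.update τ q (ψ q), ?_⟩
    apply Finset.card_lt_card
    rw [Finset.ssubset_iff_of_subset]
    · refine ⟨q, ?_, ?_⟩
      · exact Finset.mem_filter.mpr ⟨hqF, hne⟩
      · intro hmem
        have := (Finset.mem_filter.mp hmem).2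
        simp [Function.update_self] at this
    · intro x hx
      obtain ⟨hxF, hxne⟩ := Finset.mem_filter.mp hx
      refine Finset.mem_filter.mpr ⟨hxF, ?_⟩
      by_cases hxq : x = q
      · subst hxq
        simp [Function.update_self] at hxne
      · rwa [Function.update_of_ne hxq] at hxne
  have noMin : ∀ N : ℕ, ∀ τ : List ℕ → Bool, Φ τ ≤ N → False := by
    intro N
    induction N with
    | zero =>
      intro τ hτ
      obtain ⟨τ', hτ'⟩ := step τ
      omega
    | succ N ih =>
      intro τ hτ
      obtain ⟨τ', hτ'⟩ := step τ
      exact ih τ' (by omega)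
  exact noMin (Φ fun _ => false) (fun _ => false) le_rfl

/-- Goodness is antitone in the fuel. -/
lemma good_mono (φ : (List ℕ → Bool) → ℕ → ℕ) :
    ∀ (j : ℕ) (p : List ℕ), ¬ Badf φ (j + 1) p → ¬ Badf φ j p := by
  intro j
  induction j with
  | zero =>
    intro p h hb
    apply h
    intro m
    refine ⟨true, ?_⟩
    intro τ hτ
    have hlen : (p ++ [m, Bool.toNat true]).length = p.length + 2 := by simp
    rw [hlen] at hτ
    exact hb τ (segN_two_ext hτ).1
  | succ j ih =>
    intro p h hb
    apply h
    intro m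
    by_contra hno
    push_neg at hno
    obtain ⟨b, hbj⟩ := hb m
    exact ih _ (hno b) hbj

lemma good_mono' (φ : (List ℕ → Bool) → ℕ → ℕ) {j j' : ℕ} (h : j ≤ j') (p : List ℕ) :
    ¬ Badf φ j' p → ¬ Badf φ j p := by
  induction j', h using Nat.le_induction with
  | base => exact id
  | succ j' hle ih => exact fun hg => ih (good_mono φ j' p hg)

/-- From an everywhere-good position, there is a move good at every depth. -/
lemma sigma_step (φ : (List ℕ → Bool) → ℕ → ℕ) (hc : Continuous φ)
    (p : List ℕ) (hp : ∀ j, ¬ Badf φ j p) :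
    ∃ m, ∀ (b : Bool) (j : ℕ), ¬ Badf φ j (p ++ [m, b.toNat]) := by
  classical
  have hM : ∀ j, ∃ m, ∀ b : Bool, ¬ Badf φ j (p ++ [m, b.toNat]) := by
    intro j
    have h := hp (j + 1)
    simp only [Badf] at h
    push_neg at h
    exact h
  choose g hg using hM
  have hA : (Set.range fun τ : List ℕ → Bool => φ τ p.length).Finite :=
    (isCompact_range ((continuous_apply p.length).comp hc)).finite_of_discrete
  have hginA : ∀ j, g j ∈ Set.range fun τ : List ℕ → Bool => φ τ p.length := by
    intro j
    have h0 : ¬ Badf φ 0 (p ++ [g j, Bool.toNat true]) :=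
      good_mono' φ (Nat.zero_le j) _ (hg j true)
    simp only [Badf] at h0
    push_neg at h0
    obtain ⟨τ, hτ⟩ := h0
    have hlen : (p ++ [g j, Bool.toNat true]).length = p.length + 2 := by simp
    rw [hlen] at hτ
    exact ⟨τ, (segN_two_ext hτ).2.1⟩
  have : Finite ↥(Set.range fun τ : List ℕ → Bool => φ τ p.length) := hA.to_subtype
  obtain ⟨⟨m, hmA⟩, hfib⟩ := Finite.exists_infinite_fiber
    (fun j : ℕ => (⟨g j, hginA j⟩ : ↥(Set.range fun τ : List ℕ → Bool => φ τ p.length)))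
  refine ⟨m, fun b j => ?_⟩
  have hinf : {j' : ℕ | g j' = m}.Infinite := by
    rw [Set.infinite_coe_iff] at hfib
    apply hfib.mono
    intro j' hj'
    simp only [Set.mem_preimage, Set.mem_singleton_iff, Subtype.ext_iff] at hj'
    exact hj'
  obtain ⟨j', hj'mem, hj'gt⟩ := hinf.exists_gt j
  have hgj' := hg j' b
  rw [hj'mem] at hgj'
  exact good_mono' φ (le_of_lt hj'gt) _ hgj'

end WID

/-- Intuitionistic Determinacy Theorem, weak I-determinacy of arbitrary sets
(Theorem 9.6(iii), classically valid form). -/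
theorem weak_I_determinacy (X : Set (ℕ → ℕ))
    (h : ∃ φ : (List ℕ → Bool) → (ℕ → ℕ), Continuous φ ∧
      ∀ τ : List ℕ → Bool, MemOmegaTwo (φ τ) ∧ ObeysII (φ τ) τ ∧ φ τ ∈ X) :
    ∃ σ : List ℕ → ℕ, ∀ δ : ℕ → ℕ,
      MemOmegaTwo δ → ObeysI δ σ → δ ∈ X := by
  classical
  obtain ⟨φ, hc, hφ⟩ := h
  have hob : ∀ τ, ObeysII (φ τ) τ := fun τ => (hφ τ).2.1
  set σ : List ℕ → ℕ := fun p =>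
    if h : ∃ m, ∀ (b : Bool) (j : ℕ), ¬ WID.Badf φ j (p ++ [m, b.toNat]) then h.choose
    else 0 with hσdef
  refine ⟨σ, ?_⟩
  intro δ hmem hobI
  have inv : ∀ n, ∀ j, ¬ WID.Badf φ j (segN δ (2 * n)) := by
    intro n
    induction n with
    | zero =>
      intro j
      simpa using WID.goodf_nil φ hc hob j
    | succ n ih =>
      intro j
      have hex := WID.sigma_step φ hc (segN δ (2 * n)) ih
      have hσp : σ (segN δ (2 * n)) = hex.choose := dif_pos hex
      have hd0 : δ (2 * n) = hex.choose := (hobI n).trans hσp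
      have hb1 : δ (2 * n + 1) = 0 ∨ δ (2 * n + 1) = 1 := by
        have := hmem n; omega
      set b : Bool := decide (δ (2 * n + 1) = 1) with hbdef
      have hbt : b.toNat = δ (2 * n + 1) := by
        rcases hb1 with h1 | h1 <;> simp [hbdef, h1]
      have hseg : segN δ (2 * (n + 1)) = segN δ (2 * n) ++ [hex.choose, b.toNat] := by
        have h2 : 2 * (n + 1) = 2 * n + 2 := by omega
        rw [h2, WID.segN_append2, hd0, ← hbt]
      rw [hseg]
      exact hex.choose_spec b j
  have hreal : ∀ i : ℕ, ∃ τ, ∀ k < i, φ τ k = δ k := by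
    intro i
    have h0 := inv i 0
    simp only [WID.Badf] at h0
    push_neg at h0
    obtain ⟨τ, hτ⟩ := h0
    rw [WID.segN_length] at hτ
    refine ⟨τ, fun k hk => ?_⟩
    exact WID.segN_eq_iff.mp hτ k (by omega)
  set C : ℕ → Set (List ℕ → Bool) := fun i => {τ | ∀ k < i, φ τ k = δ k} with hCdef
  have hsub : ∀ i, C (i + 1) ⊆ C i := fun i τ hτ k hk => hτ k (by omega)
  have hne : ∀ i, (C i).Nonempty := fun i => (hreal i).imp fun τ h => h
  have hcl : ∀ i, IsClosed (C i) := by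
    intro i
    have hrw : C i = ⋂ k, ⋂ _ : k < i, (fun τ => φ τ k) ⁻¹' {δ k} := by
      ext τ
      simp [hCdef]
    rw [hrw]
    exact isClosed_iInter fun k => isClosed_iInter fun _ =>
      (isClosed_discrete _).preimage ((continuous_apply k).comp hc)
  have hcompact : IsCompact (C 0) := by
    have : C 0 = Set.univ :=
      Set.eq_univ_of_forall fun τ k hk => absurd hk (Nat.not_lt_zero k)
    rw [this]
    exact isCompact_univ
  obtain ⟨τ, hτ⟩ := IsCompact.nonempty_iInter_of_sequence_nonempty_isCompact_isClosed
    C hsub hne hcompact hcl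
  have hφτ : φ τ = δ := funext fun k => Set.mem_iInter.mp hτ (k + 1) k (Nat.lt_succ_self k)
  rw [← hφτ]
  exact (hφ τ).2.2
end
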